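/- For every real z with |z| < 1, ∑_{n≥1} H_n^2 z^n = (1/(1-z)) · ( (log(1-z))^2 + ∑_{k≥1} z^k/k^2 ), where H_n = ∑_{k=1}^{n} 1/k is the n-th harmonic number and both series converge. -/

import Mathlib

open Finset Real

private noncomputable def Hh (m : ℕ) : ℝ := ∑ k ∈ Finset.Icc 1 m, (1 : ℝ) / k

private lemma Hh_zero : Hh 0 = 0 := by simp [Hh]

private lemma Hh_succ (m : ℕ) : Hh (m + 1) = Hh m + 1 / ((m : ℝ) + 1) := by
  rw [Hh, Hh, Finset.sum_Icc_succ_top (by omega)]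
  push_cast
  ring

private lemma Hh_nonneg (m : ℕ) : 0 ≤ Hh m := by
  apply Finset.sum_nonneg; intro k _; positivity

private lemma Hh_le (m : ℕ) : Hh m ≤ m := by
  induction m with
  | zero => simp [Hh_zero]
  | succ n ih =>
    rw [Hh_succ]
    push_cast
    have h1 : 1 / ((n : ℝ) + 1) ≤ 1 := by
      rw [div_le_one (by positivity)]; linarith [Nat.cast_nonneg (α := ℝ) n]
    linarith

private lemma Hh_range (m : ℕ) : Hh m = ∑ k ∈ Finset.range m, 1 / ((k : ℝ) + 1) := by
  induction m with
  | zero => simp [Hh_zero]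
  | succ n ih => rw [Hh_succ, Finset.sum_range_succ, ih]

private lemma Hh_sq (n : ℕ) :
    Hh (n + 1) ^ 2 =
      ∑ i ∈ Finset.range (n + 1), (2 * Hh (i + 1) / ((i : ℝ) + 1) - 1 / ((i : ℝ) + 1) ^ 2) := by
  induction n with
  | zero =>
    have : Hh 1 = 1 := by simp [Hh]
    simp [this]
    norm_num
  | succ n ih =>
    rw [Finset.sum_range_succ, ← ih, Hh_succ (n + 1)]
    have h : ((n : ℝ) + 1) + 1 ≠ 0 := by positivity
    push_cast
    field_simp
    ring

theorem stmt_13 (z : ℝ) (hz : |z| < 1) :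
    Summable (fun n : ℕ =>
      (∑ k ∈ Finset.Icc 1 (n + 1), (1 : ℝ) / k) ^ 2 * z ^ (n + 1)) ∧
    Summable (fun k : ℕ => z ^ (k + 1) / (k + 1) ^ 2) ∧
    (∑' n : ℕ, (∑ k ∈ Finset.Icc 1 (n + 1), (1 : ℝ) / k) ^ 2 * z ^ (n + 1)) =
      (1 / (1 - z)) *
        ((Real.log (1 - z)) ^ 2 + ∑' k : ℕ, z ^ (k + 1) / (k + 1) ^ 2) := by
  have hzabs : Summable (fun n : ℕ => |z| ^ n) := summable_geometric_of_abs_lt_one (by simpa)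
  have hzpow : ∀ m : ℕ, |z| ^ (m + 1) ≤ |z| ^ m := fun m => by
    calc |z| ^ (m + 1) = |z| ^ m * |z| := by ring
    _ ≤ |z| ^ m * 1 := by
        apply mul_le_mul_of_nonneg_left (le_of_lt hz) (by positivity)
    _ = |z| ^ m := by ring
  -- the log series
  set L : ℕ → ℝ := fun k => z ^ (k + 1) / (k + 1) with hL
  have hlog : HasSum L (-Real.log (1 - z)) := hasSum_pow_div_log_of_abs_lt_one hz
  have hLnorm : Summable (fun k => ‖L k‖) := by
    apply hzabs.of_nonneg_of_le (fun k => norm_nonneg _)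
    intro k
    rw [hL]
    simp only [Real.norm_eq_abs, abs_div, abs_pow]
    calc |z| ^ (k + 1) / |(k : ℝ) + 1| ≤ |z| ^ (k + 1) / 1 := by
          apply div_le_div_of_nonneg_left (by positivity) one_pos
          rw [abs_of_nonneg (by positivity)]
          linarith [Nat.cast_nonneg (α := ℝ) k]
      _ = |z| ^ (k + 1) := by ring
      _ ≤ |z| ^ k := hzpow k
  -- the dilogarithm series
  set P : ℕ → ℝ := fun k => z ^ (k + 1) / ((k : ℝ) + 1) ^ 2 with hP
  have hPnorm : Summable (fun k => ‖P k‖) := by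
    apply hzabs.of_nonneg_of_le (fun k => norm_nonneg _)
    intro k
    rw [hP]
    simp only [Real.norm_eq_abs, abs_div, abs_pow]
    calc |z| ^ (k + 1) / |(k : ℝ) + 1| ^ 2 ≤ |z| ^ (k + 1) / 1 := by
          apply div_le_div_of_nonneg_left (by positivity) one_pos
          have h1 : (1 : ℝ) ≤ |(k : ℝ) + 1| := by
            rw [abs_of_nonneg (by positivity)]
            linarith [Nat.cast_nonneg (α := ℝ) k]
          calc (1:ℝ) = 1 ^ 2 := by ring
            _ ≤ |(k : ℝ) + 1| ^ 2 := by gcongr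
      _ = |z| ^ (k + 1) := by ring
      _ ≤ |z| ^ k := hzpow k
  have hPsum : Summable P := hPnorm.of_norm
  -- antidiagonal computation for log^2
  have antidiag_log : ∀ n : ℕ,
      ∑ kl ∈ Finset.HasAntidiagonal.antidiagonal n, L kl.1 * L kl.2
        = z ^ (n + 2) * (2 * Hh (n + 1) / ((n : ℝ) + 2)) := by
    intro n
    rw [Finset.Nat.sum_antidiagonal_eq_sum_range_succ_mk]
    have key : ∀ k ∈ Finset.range (n + 1),
        L k * L (n - k) = z ^ (n + 2) *
          (1 / ((n : ℝ) + 2) * (1 / ((k : ℝ) + 1) + 1 / ((n : ℝ) - (k : ℝ) + 1))) := by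
      intro k hk
      rw [Finset.mem_range] at hk
      have hkn : k ≤ n := by omega
      have hc : ((n - k : ℕ) : ℝ) = (n : ℝ) - (k : ℝ) := by
        rw [Nat.cast_sub hkn]
      have hkR : (k : ℝ) ≤ (n : ℝ) := by exact_mod_cast hkn
      have hzp : z ^ (k + 1) * z ^ (n - k + 1) = z ^ (n + 2) := by
        rw [← pow_add]; congr 1; omega
      rw [hL]
      simp only
      rw [hc]
      have h1 : (k : ℝ) + 1 ≠ 0 := by positivity
      have h2 : (n : ℝ) - (k : ℝ) + 1 ≠ 0 := by
        have : (0:ℝ) ≤ (n : ℝ) - (k : ℝ) := by linarith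
        positivity
      have h3 : (n : ℝ) + 2 ≠ 0 := by positivity
      field_simp
      rw [hzp]
      ring
    rw [Finset.sum_congr rfl key, ← Finset.mul_sum, ← Finset.mul_sum]
    congr 1
    rw [Finset.sum_add_distrib]
    have hsum1 : ∑ k ∈ Finset.range (n + 1), 1 / ((k : ℝ) + 1) = Hh (n + 1) :=
      (Hh_range (n + 1)).symm
    have hsum2 : ∑ k ∈ Finset.range (n + 1), 1 / ((n : ℝ) - (k : ℝ) + 1) = Hh (n + 1) := by
      rw [← Finset.sum_range_reflect]
      rw [← hsum1]
      apply Finset.sum_congr rfl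
      intro k hk
      rw [Finset.mem_range] at hk
      have : ((n - k : ℕ) : ℝ) = (n : ℝ) - (k : ℝ) := by
        rw [Nat.cast_sub (by omega)]
      rw [Nat.add_sub_cancel, this]
      congr 1
      ring
    rw [hsum1, hsum2]
    ring
  -- log^2 as a series
  have hAnti : Summable (fun n => ∑ kl ∈ Finset.HasAntidiagonal.antidiagonal n, L kl.1 * L kl.2) :=
    (summable_norm_sum_mul_antidiagonal_of_summable_norm hLnorm hLnorm).of_norm
  have hlogsq : Real.log (1 - z) ^ 2
      = ∑' n : ℕ, z ^ (n + 2) * (2 * Hh (n + 1) / ((n : ℝ) + 2)) := by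
    have h1 := tsum_mul_tsum_eq_tsum_sum_antidiagonal_of_summable_norm hLnorm hLnorm
    rw [hlog.tsum_eq] at h1
    calc Real.log (1 - z) ^ 2 = -Real.log (1 - z) * -Real.log (1 - z) := by ring
      _ = ∑' n : ℕ, ∑ kl ∈ Finset.HasAntidiagonal.antidiagonal n, L kl.1 * L kl.2 := h1
      _ = _ := tsum_congr antidiag_log
  -- shifted series A
  set A : ℕ → ℝ := fun m => z ^ (m + 1) * (2 * Hh m / ((m : ℝ) + 1)) with hA
  have hshift : ∀ n : ℕ, A (n + 1) = z ^ (n + 2) * (2 * Hh (n + 1) / ((n : ℝ) + 2)) := by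
    intro n; rw [hA]; push_cast; ring_nf
  have hAsum1 : Summable (fun n => A (n + 1)) := by
    apply Summable.congr _ (fun n => (hshift n).symm)
    exact Summable.congr hAnti antidiag_log
  have hAsum : Summable A := (summable_nat_add_iff 1).mp hAsum1
  have hA0 : A 0 = 0 := by simp [hA, Hh_zero]
  have hAtsum : ∑' m : ℕ, A m = Real.log (1 - z) ^ 2 := by
    rw [Summable.tsum_eq_zero_add hAsum, hA0, zero_add, hlogsq]
    exact tsum_congr hshift
  -- combined coefficient series E
  set E : ℕ → ℝ := fun m =>
    z ^ (m + 1) * (2 * Hh (m + 1) / ((m : ℝ) + 1) - 1 / ((m : ℝ) + 1) ^ 2) with hE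
  have hEAP : ∀ m : ℕ, E m = A m + P m := by
    intro m
    rw [hE, hA, hP]
    simp only
    rw [Hh_succ m]
    have h1 : (m : ℝ) + 1 ≠ 0 := by positivity
    field_simp
    ring
  have hEsum : Summable E := by
    apply Summable.congr (hAsum.add hPsum)
    intro m; rw [hEAP m]
  have hEtsum : ∑' m : ℕ, E m = Real.log (1 - z) ^ 2 + ∑' k : ℕ, P k := by
    rw [tsum_congr hEAP, Summable.tsum_add hAsum hPsum, hAtsum]
  have hEnorm : Summable (fun m => ‖E m‖) := by
    apply (hzabs.mul_left 3).of_nonneg_of_le (fun m => norm_nonneg _)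
    intro m
    rw [hE]
    simp only [Real.norm_eq_abs, abs_mul, abs_pow]
    have hb : |2 * Hh (m + 1) / ((m : ℝ) + 1) - 1 / ((m : ℝ) + 1) ^ 2| ≤ 3 := by
      have h1 : (0:ℝ) < (m : ℝ) + 1 := by positivity
      have hH : Hh (m + 1) ≤ (m : ℝ) + 1 := by
        have := Hh_le (m + 1); push_cast at this; linarith
      have hHn := Hh_nonneg (m + 1)
      have ht1 : 0 ≤ 2 * Hh (m + 1) / ((m : ℝ) + 1) := by positivity
      have ht2 : 2 * Hh (m + 1) / ((m : ℝ) + 1) ≤ 2 := by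
        rw [div_le_iff₀ h1]; linarith
      have ht3 : 0 ≤ 1 / ((m : ℝ) + 1) ^ 2 := by positivity
      have ht4 : 1 / ((m : ℝ) + 1) ^ 2 ≤ 1 := by
        rw [div_le_one (by positivity)]
        nlinarith [Nat.cast_nonneg (α := ℝ) m]
      rw [abs_le]; constructor <;> linarith
    calc |z| ^ (m + 1) * |2 * Hh (m + 1) / ((m : ℝ) + 1) - 1 / ((m : ℝ) + 1) ^ 2|
        ≤ |z| ^ m * 3 := by
          apply mul_le_mul (hzpow m) hb (abs_nonneg _) (by positivity)
      _ = 3 * |z| ^ m := by ring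
  -- geometric series
  have hgeo : HasSum (fun j : ℕ => z ^ j) (1 - z)⁻¹ := hasSum_geometric_of_abs_lt_one hz
  have hGnorm : Summable (fun j : ℕ => ‖z ^ j‖) := by
    simpa [Real.norm_eq_abs, abs_pow] using hzabs
  -- final antidiagonal computation
  have antidiag_fin : ∀ n : ℕ,
      ∑ kl ∈ Finset.HasAntidiagonal.antidiagonal n, E kl.1 * z ^ kl.2 = Hh (n + 1) ^ 2 * z ^ (n + 1) := by
    intro n
    rw [Finset.Nat.sum_antidiagonal_eq_sum_range_succ_mk]
    have key : ∀ k ∈ Finset.range (n + 1),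
        E k * z ^ (n - k) =
          z ^ (n + 1) * (2 * Hh (k + 1) / ((k : ℝ) + 1) - 1 / ((k : ℝ) + 1) ^ 2) := by
      intro k hk
      rw [Finset.mem_range] at hk
      have hzp : z ^ (k + 1) * z ^ (n - k) = z ^ (n + 1) := by
        rw [← pow_add]; congr 1; omega
      rw [hE]
      simp only
      rw [mul_right_comm, hzp]
    rw [Finset.sum_congr rfl key, ← Finset.mul_sum, ← Hh_sq n]
    ring
  have hFinAnti : Summable (fun n => ∑ kl ∈ Finset.HasAntidiagonal.antidiagonal n, E kl.1 * z ^ kl.2) :=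
    (summable_norm_sum_mul_antidiagonal_of_summable_norm hEnorm hGnorm).of_norm
  have hMain : Summable (fun n : ℕ => Hh (n + 1) ^ 2 * z ^ (n + 1)) :=
    Summable.congr hFinAnti antidiag_fin
  refine ⟨hMain, hPsum, ?_⟩
  have h2 := tsum_mul_tsum_eq_tsum_sum_antidiagonal_of_summable_norm hEnorm hGnorm
  rw [hEtsum, hgeo.tsum_eq] at h2
  calc (∑' n : ℕ, Hh (n + 1) ^ 2 * z ^ (n + 1))
      = ∑' n : ℕ, ∑ kl ∈ Finset.HasAntidiagonal.antidiagonal n, E kl.1 * z ^ kl.2 :=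
        (tsum_congr antidiag_fin).symm
    _ = (Real.log (1 - z) ^ 2 + ∑' k : ℕ, P k) * (1 - z)⁻¹ := h2.symm
    _ = (1 / (1 - z)) * ((Real.log (1 - z)) ^ 2 + ∑' k : ℕ, z ^ (k + 1) / (k + 1) ^ 2) := by
        rw [one_div]; ring
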